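/- Let M be a finite subset of a countable group G, let V be a finite-dimensional vector space over a field k, and let S = L(V^M, V). For every s ∈ S^G and every p ∈ S^G with p ∈ Σ(s), the dual configuration p* belongs to Σ(s*); moreover the resulting map φ : Σ(s) → Σ(s*), φ(p) = p*, is a bijection and is G-equivariant, i.e., (g·p)* = g·(p*) for all g ∈ G and p ∈ Σ(s). -/
import Mathlib


open scoped BigOperators

/-- `Σ(s)`: the closure, in the prodiscrete topology (local maps discrete),
of the shift orbit `{g·s : g ∈ G}` of the configuration of local defining maps `s`,
where `(g·s)(h) = s(g⁻¹h)`. -/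
def orbitClosure {G E : Type*} [Group G] (s : G → G → E) : Set (G → G → E) :=
  @closure _ (@Pi.topologicalSpace G (fun _ => G → E) (fun _ => ⊥))
    (Set.range fun g : G => fun h : G => s (g⁻¹ * h))

/-- The dual configuration `s*` of local defining maps, in coefficient form:
`s*(g,m) = (s(g·m, m⁻¹))ᵀ`, the transpose (dual map) of `s(g·m, m⁻¹)`. -/
def dualCoeff {k V G : Type*} [Field k] [AddCommGroup V] [Module k V] [Group G]
    (s : G → G → (V →ₗ[k] V)) :
    G → G → (Module.Dual k V →ₗ[k] Module.Dual k V) :=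
  fun g m => (s (g * m) m⁻¹).dualMap

/-- Closure in a product of discrete spaces: agreement on finite sets of coordinates. -/
lemma pi_discrete_mem_closure_iff {ι : Type*} {E : ι → Type*}
    (A : Set (∀ i, E i)) (q : ∀ i, E i) :
    q ∈ @closure _ (@Pi.topologicalSpace ι E (fun _ => ⊥)) A ↔
      ∀ F : Finset ι, ∃ a ∈ A, ∀ i ∈ F, a i = q i := by
  letI : ∀ i, TopologicalSpace (E i) := fun _ => ⊥
  haveI : ∀ i, DiscreteTopology (E i) := fun _ => ⟨rfl⟩
  rw [mem_closure_iff]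
  constructor
  · intro h F
    obtain ⟨a, ha, haA⟩ := h (Set.pi ↑F fun i => {q i})
      (isOpen_set_pi F.finite_toSet fun i _ => isOpen_discrete _)
      (by intro i _; rfl)
    exact ⟨a, haA, fun i hi => ha i hi⟩
  · intro h o ho hq
    obtain ⟨I, u, hu, hsub⟩ := isOpen_pi_iff.mp ho q hq
    obtain ⟨a, haA, ha⟩ := h I
    exact ⟨a, hsub fun i hi => (ha i hi) ▸ (hu i hi).2, haA⟩

/-- Each coordinate of an element of the orbit closure is exactly a coordinate of
some translate of `s`. -/
lemma orbitClosure_coord_exact {G E : Type*} [Group G] {s : G → G → E}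
    {p : G → G → E} (hp : p ∈ orbitClosure s) (g : G) :
    ∃ c : G, p g = s (c⁻¹ * g) := by
  obtain ⟨a, haA, ha⟩ := (pi_discrete_mem_closure_iff _ _).mp hp {g}
  obtain ⟨c, rfl⟩ := haA
  exact ⟨c, (ha g (Finset.mem_singleton_self g)).symm⟩

theorem stmt5 {k V G : Type*} [Field k] [AddCommGroup V] [Module k V]
    [FiniteDimensional k V] [Group G] [Countable G]
    (M : Finset G) (s : G → G → (V →ₗ[k] V)) (hs : ∀ g, ∀ m ∉ M, s g m = 0) :
    (∀ p ∈ orbitClosure s, dualCoeff p ∈ orbitClosure (dualCoeff s)) ∧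
    Set.BijOn (fun p => dualCoeff p) (orbitClosure s) (orbitClosure (dualCoeff s)) ∧
    (∀ g : G, ∀ p ∈ orbitClosure s,
      dualCoeff (fun h => p (g⁻¹ * h)) = fun h => dualCoeff p (g⁻¹ * h)) := by
  classical
  set D : (V →ₗ[k] V) → (Module.Dual k V →ₗ[k] Module.Dual k V) :=
    fun f => f.dualMap with hDdef
  have hDinj : Function.Injective D := by
    intro f g h
    ext v
    rw [← sub_eq_zero, ← Module.forall_dual_apply_eq_zero_iff k (f v - g v)]
    intro φ
    have := DFunLike.congr_fun (DFunLike.congr_fun h φ) v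
    simp only [hDdef, LinearMap.dualMap_apply] at this
    simp [this]
  have hD0 : D 0 = 0 := by
    ext φ v; simp [hDdef]
  -- vanishing of coefficients outside M for elements of Σ(s)
  have hvan : ∀ p ∈ orbitClosure s, ∀ g : G, ∀ m ∉ M, p g m = 0 := by
    intro p hp g m hm
    obtain ⟨c, hc⟩ := orbitClosure_coord_exact hp g
    rw [hc]; exact hs _ _ hm
  have hkey : ∀ r : G → G → (V →ₗ[k] V), ∀ a b : G,
      dualCoeff r (a * b) b⁻¹ = D (r a b) := by
    intro r a b
    simp [dualCoeff, hDdef, mul_inv_cancel_right]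
  -- part 1 : mapsTo
  have part1 : ∀ p ∈ orbitClosure s, dualCoeff p ∈ orbitClosure (dualCoeff s) := by
    intro p hp
    rw [orbitClosure, pi_discrete_mem_closure_iff]
    intro F
    obtain ⟨a, haA, ha⟩ := (pi_discrete_mem_closure_iff _ _).mp hp
      (F.biUnion fun f => M.image fun m => f * m⁻¹)
    obtain ⟨c, rfl⟩ := haA
    refine ⟨_, ⟨c, rfl⟩, ?_⟩
    intro h hh
    funext m
    show dualCoeff s (c⁻¹ * h) m = dualCoeff p h m
    by_cases hm : m⁻¹ ∈ M
    · have hmem : h * m ∈ F.biUnion fun f => M.image fun m => f * m⁻¹ :=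
        Finset.mem_biUnion.mpr ⟨h, hh, Finset.mem_image.mpr ⟨m⁻¹, hm, by simp⟩⟩
      have h1 : s (c⁻¹ * (h * m)) = p (h * m) := ha (h * m) hmem
      show (s (c⁻¹ * h * m) m⁻¹).dualMap = (p (h * m) m⁻¹).dualMap
      rw [← h1, mul_assoc]
    · show (s (c⁻¹ * h * m) m⁻¹).dualMap = (p (h * m) m⁻¹).dualMap
      rw [hvan p hp (h * m) m⁻¹ hm, hs (c⁻¹ * h * m) m⁻¹ hm]
  -- vanishing for Σ(s*)
  have hvan' : ∀ q ∈ orbitClosure (dualCoeff s), ∀ g : G, ∀ m : G, m⁻¹ ∉ M → q g m = 0 := by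
    intro q hq g m hm
    obtain ⟨c, hc⟩ := orbitClosure_coord_exact hq g
    rw [hc]
    simp only [dualCoeff]
    rw [hs _ _ hm]
    exact hD0
  -- range of coordinates of elements of Σ(s*)
  have hrange : ∀ q ∈ orbitClosure (dualCoeff s), ∀ g m : G, ∃ f, D f = q g m := by
    intro q hq g m
    obtain ⟨c, hc⟩ := orbitClosure_coord_exact hq g
    exact ⟨s (c⁻¹ * g * m) m⁻¹, by rw [hc]; rfl⟩
  -- surjectivity
  have surj : ∀ q ∈ orbitClosure (dualCoeff s),
      ∃ p ∈ orbitClosure s, dualCoeff p = q := by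
    intro q hq
    set p : G → G → (V →ₗ[k] V) := fun a b => Function.invFun D (q (a * b) b⁻¹) with hp
    have hDp : ∀ a b, D (p a b) = q (a * b) b⁻¹ := by
      intro a b
      exact Function.invFun_eq (hrange q hq (a * b) b⁻¹)
    have hp0 : ∀ a b, b ∉ M → p a b = 0 := by
      intro a b hb
      have : q (a * b) b⁻¹ = 0 := hvan' q hq (a * b) b⁻¹ (by simpa using hb)
      rw [hp]
      simp only [this, ← hD0]
      exact Function.leftInverse_invFun hDinj 0
    have hpmem : p ∈ orbitClosure s := by
      rw [orbitClosure, pi_discrete_mem_closure_iff]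
      intro F
      obtain ⟨a, haA, ha⟩ := (pi_discrete_mem_closure_iff _ _).mp hq
        (F.biUnion fun f => M.image fun m => f * m)
      obtain ⟨c, rfl⟩ := haA
      refine ⟨_, ⟨c, rfl⟩, ?_⟩
      intro h hh
      funext b
      show s (c⁻¹ * h) b = p h b
      by_cases hb : b ∈ M
      · have hmem : h * b ∈ F.biUnion fun f => M.image fun m => f * m :=
          Finset.mem_biUnion.mpr ⟨h, hh, Finset.mem_image.mpr ⟨b, hb, rfl⟩⟩
        have h1 : dualCoeff s (c⁻¹ * (h * b)) = q (h * b) := ha (h * b) hmem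
        apply hDinj
        rw [hDp h b, ← h1, ← mul_assoc]
        exact (hkey s (c⁻¹ * h) b).symm
      · rw [hp0 h b hb, hs _ _ hb]
    refine ⟨p, hpmem, ?_⟩
    funext g m
    have := hDp (g * m) m⁻¹
    simp only [mul_inv_cancel_right, inv_inv] at this
    calc dualCoeff p g m = D (p (g * m) m⁻¹) := rfl
      _ = q g m := this
  refine ⟨part1, ⟨part1, ?_, ?_⟩, ?_⟩
  · -- injOn
    intro p _ r _ h
    funext a b
    apply hDinj
    rw [← hkey p a b, ← hkey r a b]
    exact congrFun (congrFun h (a * b)) b⁻¹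
  · -- surjOn
    intro q hq
    obtain ⟨p, hpmem, hpq⟩ := surj q hq
    exact ⟨p, hpmem, hpq⟩
  · -- equivariance
    intro g p _
    funext h m
    simp [dualCoeff, mul_assoc]
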